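/- If (d−1)·Q·λ·e^{−λ} > 1, then there exists t ∈ (0,1) with f(t) = t. -/

import Mathlib

open Real

/-- If `(d−1)·Q·λ·e^{−λ} > 1`, the density evolution map
`f(t) = (1 − Q(e^{−λt} − e^{−λ}))^{d−1}` has a fixed point in `(0,1)`. -/
theorem density_evolution_fixed_point (Q lam : ℝ) (d : ℕ)
    (hQ : Q ∈ Set.Ioc (0 : ℝ) 1) (hlam : 0 < lam) (hd : 2 ≤ d)
    (h : ((d : ℝ) - 1) * Q * lam * Real.exp (-lam) > 1) :
    ∃ t ∈ Set.Ioo (0 : ℝ) 1,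
      (1 - Q * (Real.exp (-lam * t) - Real.exp (-lam))) ^ (d - 1) = t := by
  obtain ⟨hQ0, hQ1⟩ := hQ
  set g : ℝ → ℝ := fun t => (1 - Q * (Real.exp (-lam * t) - Real.exp (-lam))) ^ (d - 1) - t
    with hg
  have hgc : Continuous g := by
    apply Continuous.sub _ continuous_id
    exact (Continuous.pow (by continuity) _)
  have hg1 : g 1 = 0 := by simp [hg]
  have hg0 : 0 < g 0 := by
    have hb : 0 < 1 - Q * (Real.exp (-lam * 0) - Real.exp (-lam)) := by
      have h1 : Real.exp (-lam) > 0 := Real.exp_pos _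
      have h2 : Q * (1 - Real.exp (-lam)) < 1 := by nlinarith
      simp only [mul_zero, neg_zero, Real.exp_zero]
      linarith
    have := pow_pos hb (d - 1)
    simpa [hg] using this
  -- derivative of g at 1 is positive
  have hD : HasDerivAt g (((d : ℝ) - 1) * Q * lam * Real.exp (-lam) - 1) 1 := by
    have h1 : HasDerivAt (fun t : ℝ => -lam * t) (-lam) 1 := by
      simpa using (hasDerivAt_id (1:ℝ)).const_mul (-lam)
    have h2 : HasDerivAt (fun t : ℝ => Real.exp (-lam * t)) (Real.exp (-lam * 1) * (-lam)) 1 :=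
      (Real.hasDerivAt_exp _).comp 1 h1
    have h3 : HasDerivAt (fun t : ℝ => 1 - Q * (Real.exp (-lam * t) - Real.exp (-lam)))
        (-(Q * (Real.exp (-lam * 1) * (-lam)))) 1 := by
      have := ((h2.sub_const (Real.exp (-lam))).const_mul Q).const_sub 1
      simpa using this
    have h4 : HasDerivAt (fun t : ℝ => (1 - Q * (Real.exp (-lam * t) - Real.exp (-lam))) ^ (d-1))
        ((d-1 : ℕ) * (1 - Q * (Real.exp (-lam * 1) - Real.exp (-lam))) ^ (d - 1 - 1) *
          (-(Q * (Real.exp (-lam * 1) * (-lam))))) 1 := h3.pow (d-1)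
    have h5 := h4.sub (hasDerivAt_id 1)
    have hcast : ((d - 1 : ℕ) : ℝ) = (d : ℝ) - 1 := by
      have : (1:ℕ) ≤ d := by omega
      push_cast [Nat.cast_sub this]; ring
    convert h5 using 1
    · rfl
    · rfl
    · rfl
    simp [hcast, mul_one]
    ring
  -- get t₀ < 1 with g t₀ < 0
  have hDpos : 0 < ((d : ℝ) - 1) * Q * lam * Real.exp (-lam) - 1 := by linarith
  have hslope := hasDerivAt_iff_tendsto_slope.mp hD
  have hev : ∀ᶠ t in nhdsWithin 1 (Set.Iio 1), 0 < slope g 1 t := by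
    have : ∀ᶠ t in nhdsWithin (1:ℝ) {(1:ℝ)}ᶜ, 0 < slope g 1 t :=
      hslope.eventually (eventually_gt_nhds hDpos)
    exact this.filter_mono (nhdsWithin_mono _ (fun x hx => ne_of_lt hx))
  have hev2 : ∀ᶠ t in nhdsWithin (1:ℝ) (Set.Iio 1), t ∈ Set.Ioo (0:ℝ) 1 := by
    have : Set.Ioo (0:ℝ) 1 ∈ nhdsWithin (1:ℝ) (Set.Iio 1) :=
      Ioo_mem_nhdsLT_of_mem (by constructor <;> norm_num)
    exact this
  obtain ⟨t₀, ht₀s, ht₀m⟩ := (hev.and hev2).exists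
  have ht₀neg : g t₀ < 0 := by
    have hden : t₀ - 1 < 0 := by linarith [ht₀m.2]
    have : 0 < (g t₀ - g 1) / (t₀ - 1) := by
      simpa [slope_def_field, div_eq_mul_inv] using ht₀s
    rcases div_pos_iff.mp this with ⟨_, hb⟩ | ⟨ha, _⟩
    · linarith
    · linarith
  -- IVT on [0, t₀]
  have hivt : (0:ℝ) ∈ g '' Set.Ioo 0 t₀ := by
    apply intermediate_value_Ioo' (le_of_lt ht₀m.1) hgc.continuousOn
    exact ⟨ht₀neg, hg0⟩
  obtain ⟨t, htm, htv⟩ := hivt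
  refine ⟨t, ⟨htm.1, lt_trans htm.2 ht₀m.2⟩, ?_⟩
  have : (1 - Q * (Real.exp (-lam * t) - Real.exp (-lam))) ^ (d - 1) - t = 0 := htv
  linarith
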